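/- Let p₁ = !![1/2, 0; 0, −1/2], p₂ = !![0, 1/2; 1/2, 0], k = !![0, −1/2; 1/2, 0], and fix β, φ ∈ ℝ. Define γ : ℝ → (real 2×2 matrices) by γ(t) = exp(t·(cos(φ)·p₁ + sin(φ)·p₂ + β·k)) · exp(−t·β·k). Then for every t ∈ ℝ, γ has derivative at t equal to γ(t)·(cos(βt + φ)·p₁ + sin(βt + φ)·p₂). -/

import Mathlib

open NormedSpace Filter Topology

section LinftyFacts
attribute [local instance] Matrix.linftyOpNormedRing Matrix.linftyOpNormedAlgebra

lemma geo_aux_map_exp (f : ℂ →+* Matrix (Fin 2) (Fin 2) ℝ) (hf : Continuous f) (z : ℂ) :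
    f (exp z) = exp (f z) := map_exp f hf z

lemma geo_aux_slope (X kk : Matrix (Fin 2) (Fin 2) ℝ) (β t : ℝ) :
    Filter.Tendsto
      (slope (fun u : ℝ => exp (u • X) * exp ((-(u * β)) • kk)) t) (𝓝[≠] t)
      (𝓝 (exp (t • X) * X * exp ((-(t * β)) • kk) +
        exp (t • X) * ((-β) • (exp ((-(t * β)) • kk) * kk)))) := by
  refine hasDerivAt_iff_tendsto_slope.mp ?_
  have hg : HasDerivAt (fun u : ℝ => -(u * β)) (-β) t := by
    exact (((hasDerivAt_id' t).mul_const β).neg).congr_deriv (by ring)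
  have hB : HasDerivAt (fun u : ℝ => exp ((-(u * β)) • kk))
      ((-β) • (exp ((-(t * β)) • kk) * kk)) t :=
    by have h0 := hasDerivAt_exp_smul_const (𝕂 := ℝ) kk (-(t * β)); exact h0.scomp t hg
  exact (hasDerivAt_exp_smul_const X t).mul hB
end LinftyFacts

attribute [local instance] Matrix.normedAddCommGroup Matrix.normedSpace

noncomputable def cToM : ℂ →+* Matrix (Fin 2) (Fin 2) ℝ where
  toFun z := !![z.re, -z.im; z.im, z.re]
  map_one' := by simp [Matrix.one_fin_two]
  map_mul' z w := by
    simp [Matrix.mul_fin_two, Complex.mul_re, Complex.mul_im]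
    ring_nf
    simp
  map_zero' := by ext i j; fin_cases i <;> fin_cases j <;> simp
  map_add' z w := by
    ext i j
    fin_cases i <;> fin_cases j <;> simp [Matrix.add_apply] <;> ring

lemma cToM_eq (z : ℂ) : cToM z = z.re • !![(1:ℝ),0;0,1] + z.im • !![(0:ℝ),-1;1,0] := by
  ext i j
  fin_cases i <;> fin_cases j <;>
    simp [cToM, Matrix.add_apply, Matrix.smul_apply]

lemma cToM_continuous : Continuous cToM := by
  have : Continuous (fun z : ℂ => z.re • !![(1:ℝ),0;0,1] + z.im • !![(0:ℝ),-1;1,0]) :=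
    (Complex.continuous_re.smul continuous_const).add
      (Complex.continuous_im.smul continuous_const)
  simpa [funext cToM_eq] using this

lemma exp_k_rot (u : ℝ) :
    exp (u • !![(0:ℝ), -1/2; 1/2, 0]) =
      !![Real.cos (u/2), -Real.sin (u/2); Real.sin (u/2), Real.cos (u/2)] := by
  have h1 : u • !![(0:ℝ), -1/2; 1/2, 0] = cToM ((u/2 : ℝ) * Complex.I) := by
    ext i j
    fin_cases i <;> fin_cases j <;> simp [cToM, Matrix.smul_apply] <;> ring
  rw [h1, ← geo_aux_map_exp cToM cToM_continuous]
  have h2 : exp (((u/2 : ℝ) : ℂ) * Complex.I) = Complex.exp (((u/2 : ℝ) : ℂ) * Complex.I) := by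
    rw [Complex.exp_eq_exp_ℂ]
  rw [h2]
  have h3 : ((u : ℂ)/2 * Complex.I) = (((u/2 : ℝ) : ℂ) * Complex.I) := by push_cast; ring
  ext i j
  fin_cases i <;> fin_cases j <;>
    simp [cToM] <;>
      simp only [h3, Complex.exp_ofReal_mul_I_re, Complex.exp_ofReal_mul_I_im]

theorem hasDerivAt_geodesic
    (p₁ p₂ k : Matrix (Fin 2) (Fin 2) ℝ)
    (hp₁ : p₁ = !![1/2, 0; 0, -1/2])
    (hp₂ : p₂ = !![0, 1/2; 1/2, 0])
    (hk : k = !![0, -1/2; 1/2, 0])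
    (β φ : ℝ)
    (γ : ℝ → Matrix (Fin 2) (Fin 2) ℝ)
    (hγ : ∀ t : ℝ, γ t =
      exp (t • (Real.cos φ • p₁ + Real.sin φ • p₂ + β • k)) * exp ((-(t * β)) • k)) :
    ∀ t : ℝ, HasDerivAt γ
      (γ t * (Real.cos (β * t + φ) • p₁ + Real.sin (β * t + φ) • p₂)) t := by
  intro t
  set X := Real.cos φ • p₁ + Real.sin φ • p₂ + β • k with hX
  have hγfun : γ = fun u : ℝ => exp (u • X) * exp ((-(u * β)) • k) := funext hγ
  have key : HasDerivAt γ
      (exp (t • X) * X * exp ((-(t * β)) • k) +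
        exp (t • X) * ((-β) • (exp ((-(t * β)) • k) * k))) t := by
    rw [hγfun]; refine hasDerivAt_iff_tendsto_slope.mpr ?_
    exact geo_aux_slope X k β t
  have hE : exp ((-(t * β)) • k) =
      !![Real.cos (-(t * β)/2), -Real.sin (-(t * β)/2);
         Real.sin (-(t * β)/2), Real.cos (-(t * β)/2)] := by
    rw [hk]; exact exp_k_rot (-(t * β))
  set E := exp ((-(t * β)) • k) with hEdef
  have h := Real.sin_sq_add_cos_sq (t * β / 2)
  have hI : X * E + (-β) • (E * k) =
      E * (Real.cos (β * t + φ) • p₁ + Real.sin (β * t + φ) • p₂) := by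
    rw [hE, hX, hp₁, hp₂, hk]
    have e1 : -(t * β)/2 = -(t * β / 2) := by ring
    have e2 : β * t + φ = 2 * (t * β / 2) + φ := by ring
    rw [e1, Real.cos_neg, Real.sin_neg, e2, Real.cos_add, Real.sin_add,
      Real.cos_two_mul, Real.sin_two_mul]
    ext i j
    fin_cases i <;> fin_cases j
    · simp [Matrix.mul_apply, Fin.sum_univ_two, Matrix.add_apply, Matrix.smul_apply]
      linear_combination (-(Real.cos φ * Real.cos (t * β / 2))) * h
    · simp [Matrix.mul_apply, Fin.sum_univ_two, Matrix.add_apply, Matrix.smul_apply]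
      linear_combination (-(Real.sin φ * Real.cos (t * β / 2))) * h
    · simp [Matrix.mul_apply, Fin.sum_univ_two, Matrix.add_apply, Matrix.smul_apply]
      linear_combination (-(Real.sin φ * Real.cos (t * β / 2))) * h
    · simp [Matrix.mul_apply, Fin.sum_univ_two, Matrix.add_apply, Matrix.smul_apply]
      linear_combination (Real.cos φ * Real.cos (t * β / 2)) * h
  have hfinal : exp (t • X) * X * E + exp (t • X) * ((-β) • (E * k)) =
      γ t * (Real.cos (β * t + φ) • p₁ + Real.sin (β * t + φ) • p₂) := by
    rw [hγ t, ← hEdef, mul_assoc (exp (t • X)) X E, ← mul_add, hI, ← mul_assoc]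
  rw [hfinal] at key
  exact key
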